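/- Let rewards r_{i,t}(c) ∈ [0,1] for i ∈ [K], t ∈ [T], c ∈ [C] be fixed, and let contexts c_1, …, c_T be drawn i.i.d. from a distribution D on [C]. Define π_Ante(c) = argmax_{i ∈ [K]} Σ_{t=1}^T r_{i,t}(c) and π_Post(c) = argmax_{i ∈ [K]} Σ_{t=1}^T r_{i,t}(c)·1{c_t = c}. For each context c let Δ_c = min_{i ≠ π_Ante(c)} (1/T)·Σ_{t=1}^T (r_{π_Ante(c),t}(c) − r_{i,t}(c)), and let M = min_{c ∈ [C]} D(c)·Δ_c. If M ≥ √(2·log(T·C·K)/T), then E[Σ_{t=1}^T r_{π_Post(c_t),t}(c_t)] − E[Σ_{t=1}^T r_{π_Ante(c_t),t}(c_t)] ≤ 1; equivalently, for any algorithm the expected ex-ante regret and the expected ex-post regret differ by at most 1. -/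

import Mathlib

open MeasureTheory ProbabilityTheory Finset
open scoped Classical


lemma exp_quad {x : ℝ} (hx : |x| ≤ 1) : Real.exp x ≤ 1 + x + (3/4) * x^2 := by
  have h := Real.exp_bound hx (by norm_num : 0 < 3)
  have hs : ∑ m ∈ Finset.range 3, x ^ m / (Nat.factorial m) = 1 + x + x^2/2 := by
    simp [Finset.sum_range_succ, Nat.factorial]
  rw [hs] at h
  have h3 : |x|^3 ≤ x^2 := by
    have : |x|^3 = |x| * |x|^2 := by ring
    rw [this, sq_abs]
    nlinarith [sq_nonneg x, abs_nonneg x]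
  have hb : |x| ^ 3 * ((3:ℕ).succ / ((Nat.factorial 3) * 3)) ≤ (2/9) * x^2 := by
    norm_num [Nat.factorial]
    nlinarith
  have := abs_le.mp h
  nlinarith

lemma step_bound {p d l : ℝ} (hp0 : 0 ≤ p) (hp1 : p ≤ 1) (hd : |d| ≤ 1)
    (hl0 : 0 ≤ l) (hl1 : l ≤ 1) :
    p * Real.exp (l * (p * d - d)) + (1 - p) * Real.exp (l * (p * d))
      ≤ Real.exp (3/16 * l^2) := by
  have hd2 : d^2 ≤ 1 := by nlinarith [sq_abs d, abs_nonneg d]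
  have habs1 : |l * (p * d - d)| ≤ 1 := by
    rw [abs_mul, abs_of_nonneg hl0]
    have : |p * d - d| = (1 - p) * |d| := by
      rw [show p * d - d = -((1-p)*d) by ring, abs_neg, abs_mul, abs_of_nonneg (by linarith)]
    rw [this]
    nlinarith [abs_nonneg d, mul_nonneg hl0 (abs_nonneg d), mul_le_one₀ hl1 (abs_nonneg d) hd]
  have habs2 : |l * (p * d)| ≤ 1 := by
    rw [abs_mul, abs_of_nonneg hl0, abs_mul, abs_of_nonneg hp0]
    nlinarith [abs_nonneg d, mul_nonneg hl0 (abs_nonneg d), mul_le_one₀ hl1 (abs_nonneg d) hd]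
  have h1 := exp_quad habs1
  have h2 := exp_quad habs2
  have key : p * Real.exp (l * (p * d - d)) + (1 - p) * Real.exp (l * (p * d))
      ≤ 1 + 3/16 * l^2 := by
    have e1 : p * Real.exp (l * (p * d - d)) ≤ p * (1 + l*(p*d-d) + 3/4 * (l*(p*d-d))^2) :=
      mul_le_mul_of_nonneg_left h1 hp0
    have e2 : (1-p) * Real.exp (l * (p * d)) ≤ (1-p) * (1 + l*(p*d) + 3/4 * (l*(p*d))^2) :=
      mul_le_mul_of_nonneg_left h2 (by linarith)
    nlinarith [sq_nonneg (1 - 2*p), sq_nonneg l, sq_nonneg d, sq_nonneg (l*d),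
      mul_nonneg (mul_nonneg hp0 (by linarith : (0:ℝ) ≤ 1-p)) (sq_nonneg (l*d)),
      sq_nonneg (l*d*(1-2*p))]
  calc p * Real.exp (l * (p * d - d)) + (1 - p) * Real.exp (l * (p * d))
      ≤ 1 + 3/16 * l^2 := key
    _ ≤ Real.exp (3/16 * l^2) := by linarith [Real.add_one_le_exp (3/16 * l^2)]

lemma tail_bound
    (K C T : ℕ) (hK : 2 ≤ K) (hC : 1 ≤ C) (hT : 1 ≤ T)
    (Ω : Type) (mΩ : MeasurableSpace Ω) (μ : Measure Ω) (hμ : IsProbabilityMeasure μ)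
    (D : Measure (Fin C)) (hD : IsProbabilityMeasure D)
    (d : ℕ → ℝ) (hd : ∀ t, |d t| ≤ 1)
    (c : Fin C)
    (ctx : Ω → ℕ → Fin C) (hmeas : ∀ t, Measurable fun ω => ctx ω t)
    (hlaw : ∀ t : Fin T, Measure.map (fun ω => ctx ω (t:ℕ)) μ = D)
    (hindep : iIndepFun (fun (t : Fin T) ω => ctx ω (t:ℕ)) μ)
    (hM : Real.sqrt (2 * Real.log ((T:ℝ)*C*K) / T)
        ≤ (D {c}).toReal * ((1/(T:ℝ)) * ∑ t ∈ Finset.range T, d t)) :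
    (μ {ω | (∑ t ∈ Finset.range T, if ctx ω t = c then d t else 0) ≤ 0}).toReal
      ≤ 1 / ((T:ℝ) * C * K) := by
  have hT0 : (0:ℝ) < T := by exact_mod_cast hT
  have hTCK1 : (1:ℝ) ≤ (T:ℝ) * C * K := by
    have h1 : (1:ℝ) ≤ (T:ℝ) := by exact_mod_cast hT
    have h2 : (1:ℝ) ≤ (C:ℝ) := by exact_mod_cast hC
    have h3 : (1:ℝ) ≤ (K:ℝ) := by exact_mod_cast (le_trans one_le_two hK)
    have h12 : (1:ℝ) ≤ (T:ℝ) * C := by nlinarith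
    nlinarith
  have hTCK0 : (0:ℝ) < (T:ℝ) * C * K := lt_of_lt_of_le one_pos hTCK1
  have hlog0 : 0 ≤ Real.log ((T:ℝ) * C * K) := Real.log_nonneg hTCK1
  set p : ℝ := (D {c}).toReal with hp_def
  set Δ : ℝ := p * ((1/(T:ℝ)) * ∑ t ∈ Finset.range T, d t) with hΔ_def
  have hΔ0 : 0 ≤ Δ := le_trans (Real.sqrt_nonneg _) hM
  have hp0 : 0 ≤ p := ENNReal.toReal_nonneg
  have hp1 : p ≤ 1 := by
    have := prob_le_one (μ := D) (s := {c})
    simpa [hp_def] using ENNReal.toReal_mono (by simp) this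
  have hsum_le : ∑ t ∈ Finset.range T, d t ≤ T := by
    calc ∑ t ∈ Finset.range T, d t ≤ ∑ _t ∈ Finset.range T, (1:ℝ) :=
          Finset.sum_le_sum fun t _ => (abs_le.mp (hd t)).2
      _ = T := by simp
  have hΔ1 : Δ ≤ 1 := by
    rcases le_or_gt (∑ t ∈ Finset.range T, d t) 0 with h | h
    · have : Δ ≤ 0 := by
        rw [hΔ_def]
        apply mul_nonpos_of_nonneg_of_nonpos hp0
        apply mul_nonpos_of_nonneg_of_nonpos (by positivity) h
      linarith
    · rw [hΔ_def]
      have h1 : (1/(T:ℝ)) * ∑ t ∈ Finset.range T, d t ≤ 1 := by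
        rw [div_mul_eq_mul_div, one_mul, div_le_one hT0]; exact hsum_le
      nlinarith
  -- the independent summands
  set g : Fin T → Fin C → ℝ := fun t x => p * d t - (if x = c then d t else 0) with hg_def
  set W : Fin T → Ω → ℝ := fun t => g t ∘ (fun ω => ctx ω (t:ℕ)) with hW_def
  have hWindep : iIndepFun W μ :=
    hindep.comp g (fun t => measurable_of_countable _)
  have hWmeas : ∀ t, Measurable (W t) := fun t =>
    (measurable_of_countable (g t)).comp (hmeas (t:ℕ))
  have hWbdd : ∀ t ω, |W t ω| ≤ 2 := by
    intro t ω
    have h1 : |p * d (t:ℕ)| ≤ 1 := by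
      rw [abs_mul, abs_of_nonneg hp0]
      nlinarith [abs_nonneg (d (t:ℕ)), hd (t:ℕ)]
    have h2 : |(if ctx ω (t:ℕ) = c then d (t:ℕ) else 0)| ≤ 1 := by
      split <;> simp [hd (t:ℕ)]
    calc |W t ω| ≤ |p * d (t:ℕ)| + |(if ctx ω (t:ℕ) = c then d (t:ℕ) else 0)| :=
          abs_sub (p * d (t:ℕ)) _
      _ ≤ 2 := by linarith
  have hint : ∀ t : Fin T, Integrable (fun ω => Real.exp (Δ * W t ω)) μ := by
    intro t
    refine Integrable.mono' (integrable_const (Real.exp 2))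
      (((hWmeas t).const_mul Δ).exp.aestronglyMeasurable) (ae_of_all _ fun ω => ?_)
    rw [Real.norm_eq_abs, abs_of_pos (Real.exp_pos _), Real.exp_le_exp]
    calc Δ * W t ω ≤ |Δ * W t ω| := le_abs_self _
      _ = Δ * |W t ω| := by rw [abs_mul, abs_of_nonneg hΔ0]
      _ ≤ 1 * 2 := by
          apply mul_le_mul hΔ1 (hWbdd t ω) (abs_nonneg _) zero_le_one
      _ = 2 := by norm_num
  set ε : ℝ := (T:ℝ) * Δ with hε_def
  -- rewrite the event
  have hset : {ω | (∑ t ∈ Finset.range T, if ctx ω t = c then d t else 0) ≤ 0}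
      = {ω | ε ≤ (∑ t : Fin T, W t) ω} := by
    ext ω
    have hsplit : (∑ t : Fin T, W t) ω
        = ε - (∑ t ∈ Finset.range T, if ctx ω t = c then d t else 0) := by
      rw [Finset.sum_apply]
      have h1 : ∀ t : Fin T, W t ω
          = p * d (t:ℕ) - (if ctx ω (t:ℕ) = c then d (t:ℕ) else 0) := fun t => rfl
      rw [Finset.sum_congr rfl (fun t _ => h1 t), Finset.sum_sub_distrib,
        Fin.sum_univ_eq_sum_range (fun n => p * d n) T,
        Fin.sum_univ_eq_sum_range (fun n => if ctx ω n = c then d n else 0) T,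
        ← Finset.mul_sum]
      have : ε = p * ∑ t ∈ Finset.range T, d t := by
        rw [hε_def, hΔ_def]; field_simp
      rw [this]
    simp only [Set.mem_setOf_eq, hsplit]
    constructor <;> intro h <;> linarith
  -- Chernoff
  have hintsum : Integrable (fun ω => Real.exp (Δ * (∑ t : Fin T, W t) ω)) μ :=
    hWindep.integrable_exp_mul_sum hWmeas (fun t _ => hint t)
  have chern := measure_ge_le_exp_mul_mgf (μ := μ) (X := ∑ t : Fin T, W t) ε hΔ0 hintsum
  rw [hWindep.mgf_sum hWmeas Finset.univ] at chern
  -- per-term mgf bound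
  have hmgf : ∀ t : Fin T, mgf (W t) μ Δ ≤ Real.exp (3/16 * Δ^2) := by
    intro t
    have hpush : mgf (W t) μ Δ = ∫ x, Real.exp (Δ * g t x) ∂D := by
      rw [mgf, ← hlaw t]
      rw [integral_map (hmeas (t:ℕ)).aemeasurable
        (measurable_of_countable _).aestronglyMeasurable]
      rfl
    have hfin : ∫ x, Real.exp (Δ * g t x) ∂D
        = ∑ x : Fin C, (D {x}).toReal • Real.exp (Δ * g t x) :=
      integral_fintype (.of_finite)
    have hone : ∑ x : Fin C, (D {x}).toReal = 1 := by
      have h1 : ∫ _x : Fin C, (1:ℝ) ∂D = 1 := by simp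
      have h2 : ∫ _x : Fin C, (1:ℝ) ∂D = ∑ x : Fin C, (D {x}).toReal • (1:ℝ) :=
        integral_fintype (.of_finite)
      simp only [smul_eq_mul, mul_one] at h2
      linarith [h1.symm.trans h2]
    set B : ℝ := Real.exp (Δ * (p * d (t:ℕ))) with hB_def
    have hval : ∑ x : Fin C, (D {x}).toReal • Real.exp (Δ * g t x)
        = p * Real.exp (Δ * (p * d (t:ℕ) - d (t:ℕ))) + (1 - p) * B := by
      have hterm : ∀ x : Fin C, (D {x}).toReal • Real.exp (Δ * g t x)
          = (D {x}).toReal * B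
            + (if x = c then p * (Real.exp (Δ * (p * d (t:ℕ) - d (t:ℕ))) - B) else 0) := by
        intro x
        by_cases hx : x = c
        · subst hx; simp [hg_def, smul_eq_mul, hp_def]; ring
        · simp [hg_def, hx, smul_eq_mul, hB_def]
      rw [Finset.sum_congr rfl (fun x _ => hterm x), Finset.sum_add_distrib,
        ← Finset.sum_mul, hone, Finset.sum_ite_eq' Finset.univ c
          (fun _ => p * (Real.exp (Δ * (p * d (t:ℕ) - d (t:ℕ))) - B))]
      simp
      ring
    rw [hpush, hfin, hval, hB_def]
    exact step_bound hp0 hp1 (hd (t:ℕ)) hΔ0 hΔ1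
  have hprod : ∏ t : Fin T, mgf (W t) μ Δ ≤ Real.exp ((T:ℝ) * (3/16 * Δ^2)) := by
    calc ∏ t : Fin T, mgf (W t) μ Δ ≤ ∏ _t : Fin T, Real.exp (3/16 * Δ^2) :=
          Finset.prod_le_prod (fun t _ => mgf_nonneg) (fun t _ => hmgf t)
      _ = Real.exp (3/16 * Δ^2) ^ T := by
          rw [Finset.prod_const, Finset.card_univ, Fintype.card_fin]
      _ = Real.exp ((T:ℝ) * (3/16 * Δ^2)) := by
          rw [← Real.exp_nat_mul]
  have hfinal : (μ {ω | ε ≤ (∑ t : Fin T, W t) ω}).toReal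
      ≤ Real.exp (-(13/16) * ((T:ℝ) * Δ^2)) := by
    calc (μ {ω | ε ≤ (∑ t : Fin T, W t) ω}).toReal
        ≤ Real.exp (-Δ * ε) * ∏ t : Fin T, mgf (W t) μ Δ := chern
      _ ≤ Real.exp (-Δ * ε) * Real.exp ((T:ℝ) * (3/16 * Δ^2)) := by
          apply mul_le_mul_of_nonneg_left hprod (le_of_lt (Real.exp_pos _))
      _ = Real.exp (-Δ * ε + (T:ℝ) * (3/16 * Δ^2)) := (Real.exp_add _ _).symm
      _ = Real.exp (-(13/16) * ((T:ℝ) * Δ^2)) := by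
          rw [hε_def]; ring_nf
  rw [hset]
  refine le_trans hfinal ?_
  -- numeric end
  have hsq : 2 * Real.log ((T:ℝ)*C*K) / T ≤ Δ^2 := by
    have h1 : 0 ≤ 2 * Real.log ((T:ℝ)*C*K) / T := by positivity
    calc 2 * Real.log ((T:ℝ)*C*K) / T
        = (Real.sqrt (2 * Real.log ((T:ℝ)*C*K) / T))^2 := (Real.sq_sqrt h1).symm
      _ ≤ Δ^2 := pow_le_pow_left₀ (Real.sqrt_nonneg _) hM 2
  have hTΔ : 2 * Real.log ((T:ℝ)*C*K) ≤ (T:ℝ) * Δ^2 := by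
    rw [div_le_iff₀ hT0] at hsq; linarith [hsq]
  have : Real.exp (-(13/16) * ((T:ℝ) * Δ^2)) ≤ Real.exp (-Real.log ((T:ℝ)*C*K)) := by
    rw [Real.exp_le_exp]; nlinarith
  refine le_trans this ?_
  rw [Real.exp_neg, Real.exp_log hTCK0, one_div]

/-- when every context occurs often enough relative to its gap, the ex-ante
and ex-post benchmarks nearly coincide.  With rewards `r_{i,t}(c) ∈ [0,1]` fixed and
contexts i.i.d. from `D`, if for every context `c` and every arm `i ≠ π_Ante(c)` we have
`D(c)·(1/T)·∑_t (r_{π_Ante(c),t}(c) − r_{i,t}(c)) ≥ √(2 log(T·C·K)/T)` (i.e.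
`M ≥ √(2 log(TCK)/T)`), then the expected total reward of the hindsight-optimal
stationary policy exceeds that of the ex-ante optimal stationary policy by at most 1;
equivalently, the expected ex-ante and ex-post regrets of any algorithm differ by at
most 1. -/
theorem exante_expost_regret_close
    (K C T : ℕ) (hK : 2 ≤ K) (hC : 1 ≤ C) (hT : 1 ≤ T)
    (Ω : Type) (_ : MeasurableSpace Ω) (μ : Measure Ω) (hμ : IsProbabilityMeasure μ)
    (D : Measure (Fin C)) (hD : IsProbabilityMeasure D)
    (rr : Fin K → ℕ → Fin C → ℝ)
    (hrr : ∀ i t c, rr i t c ∈ Set.Icc (0:ℝ) 1)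
    (ctx : Ω → ℕ → Fin C)
    (hmeas : ∀ t, Measurable (fun ω => ctx ω t))
    (hlaw : ∀ t : Fin T, Measure.map (fun ω => ctx ω (t : ℕ)) μ = D)
    (hindep : iIndepFun (fun (t : Fin T) ω => ctx ω (t : ℕ)) μ)
    (πA : Fin C → Fin K)
    -- π_Ante maximizes the total reward in every context
    (hA : ∀ c j, ∑ t ∈ Finset.range T, rr j t c ≤ ∑ t ∈ Finset.range T, rr (πA c) t c)
    -- M = min_c D(c)·Δ_c ≥ √(2 log(T·C·K)/T)
    (hM : ∀ (c : Fin C) (i : Fin K), i ≠ πA c →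
      Real.sqrt (2 * Real.log ((T : ℝ) * C * K) / T) ≤
        (D {c}).toReal *
          ((1 / (T : ℝ)) * ∑ t ∈ Finset.range T, (rr (πA c) t c - rr i t c)))
    (πP : Ω → Fin C → Fin K)
    -- π_Post is the best stationary policy in hindsight
    (hP : ∀ ω (c : Fin C) (j : Fin K),
      ∑ t ∈ Finset.range T, (if ctx ω t = c then rr j t c else 0)
        ≤ ∑ t ∈ Finset.range T, (if ctx ω t = c then rr (πP ω c) t c else 0)) :
    (∫ ω, (∑ t ∈ Finset.range T, rr (πP ω (ctx ω t)) t (ctx ω t)) ∂μ)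
      - (∫ ω, (∑ t ∈ Finset.range T, rr (πA (ctx ω t)) t (ctx ω t)) ∂μ) ≤ 1 := by
  have hT0 : (0:ℝ) < T := by exact_mod_cast hT
  have hC0 : (0:ℝ) < C := by exact_mod_cast hC
  have hK0 : (0:ℝ) < K := by exact_mod_cast lt_of_lt_of_le two_pos hK
  -- the hindsight deficit statistics
  set S : Fin C → Fin K → Ω → ℝ := fun c i ω =>
    ∑ t ∈ Finset.range T, (if ctx ω t = c then rr (πA c) t c - rr i t c else 0) with hS_def
  have hSmeas : ∀ c i, Measurable (S c i) := by
    intro c i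
    apply Finset.measurable_sum
    intro t _
    exact Measurable.ite ((hmeas t) (measurableSet_singleton c)) measurable_const
      measurable_const
  have hSsetmeas : ∀ c i, MeasurableSet {ω | S c i ω ≤ 0} :=
    fun c i => measurableSet_le (hSmeas c i) measurable_const
  have key : ∀ c i, i ≠ πA c → (μ {ω | S c i ω ≤ 0}).toReal ≤ 1 / ((T:ℝ) * C * K) := by
    intro c i hi
    exact tail_bound K C T hK hC hT Ω _ μ hμ D hD
      (fun t => rr (πA c) t c - rr i t c)
      (fun t => by
        have h1 := hrr (πA c) t c
        have h2 := hrr i t c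
        rw [Set.mem_Icc] at h1 h2
        rw [abs_le]
        constructor <;> linarith)
      c ctx hmeas hlaw hindep (hM c i hi)
  -- the dominating function
  set G : Ω → ℝ := fun ω => ∑ c : Fin C, ∑ i ∈ Finset.univ \ {πA c},
      (if S c i ω ≤ 0 then (T:ℝ) else 0) with hG_def
  have hterm_int : ∀ (c : Fin C) (i : Fin K),
      Integrable (fun ω => if S c i ω ≤ 0 then (T:ℝ) else 0) μ := by
    intro c i
    refine Integrable.mono' (integrable_const (T:ℝ))
      ((Measurable.ite (hSsetmeas c i) measurable_const
        measurable_const).aestronglyMeasurable) (ae_of_all _ fun ω => ?_)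
    rw [Real.norm_eq_abs]
    split <;> simp [abs_of_nonneg, le_of_lt hT0]
  have hGint : Integrable G μ := by
    apply integrable_finset_sum
    intro c _
    exact integrable_finset_sum _ (fun i _ => hterm_int c i)
  have hGbound : ∫ ω, G ω ∂μ ≤ 1 := by
    rw [integral_finset_sum _ (fun c _ => integrable_finset_sum _ (fun i _ => hterm_int c i))]
    have hterm_val : ∀ (c : Fin C) (i : Fin K), i ≠ πA c →
        ∫ ω, (if S c i ω ≤ 0 then (T:ℝ) else 0) ∂μ ≤ (T:ℝ) * (1 / ((T:ℝ) * C * K)) := by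
      intro c i hi
      have heq : (fun ω => if S c i ω ≤ 0 then (T:ℝ) else 0)
          = Set.indicator {ω | S c i ω ≤ 0} (fun _ => (T:ℝ)) := by
        funext ω
        by_cases h : S c i ω ≤ 0 <;> simp [Set.indicator, h]
      rw [heq, integral_indicator_const _ (hSsetmeas c i), smul_eq_mul, mul_comm]
      exact mul_le_mul_of_nonneg_left (key c i hi) (le_of_lt hT0)
    calc ∑ c : Fin C, ∫ ω, (∑ i ∈ Finset.univ \ {πA c},
            (if S c i ω ≤ 0 then (T:ℝ) else 0)) ∂μ
        = ∑ c : Fin C, ∑ i ∈ Finset.univ \ {πA c},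
            ∫ ω, (if S c i ω ≤ 0 then (T:ℝ) else 0) ∂μ := by
          refine Finset.sum_congr rfl fun c _ => ?_
          exact integral_finset_sum _ (fun i _ => hterm_int c i)
      _ ≤ ∑ _c : Fin C, ∑ _i ∈ (Finset.univ : Finset (Fin K)) \ {πA _c},
            (T:ℝ) * (1 / ((T:ℝ) * C * K)) := by
          refine Finset.sum_le_sum fun c _ => Finset.sum_le_sum fun i hi => ?_
          have hi' : i ≠ πA c := by
            simp only [Finset.mem_sdiff, Finset.mem_singleton] at hi
            exact hi.2
          exact hterm_val c i hi'
      _ ≤ ∑ _c : Fin C, (K:ℝ) * ((T:ℝ) * (1 / ((T:ℝ) * C * K))) := by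
          refine Finset.sum_le_sum fun c _ => ?_
          rw [Finset.sum_const, nsmul_eq_mul]
          have hcard : ((Finset.univ \ {πA c}).card : ℝ) ≤ (K:ℝ) := by
            have := Finset.card_le_card (Finset.sdiff_subset
              (s := (Finset.univ : Finset (Fin K))) (t := {πA c}))
            simp only [Finset.card_univ, Fintype.card_fin] at this
            exact_mod_cast this
          apply mul_le_mul_of_nonneg_right hcard
          positivity
      _ = (C:ℝ) * ((K:ℝ) * ((T:ℝ) * (1 / ((T:ℝ) * C * K)))) := by
          rw [Finset.sum_const, Finset.card_univ, Fintype.card_fin, nsmul_eq_mul]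
      _ ≤ 1 := by
          have h : (C:ℝ) * ((K:ℝ) * ((T:ℝ) * (1 / ((T:ℝ) * C * K)))) = 1 := by
            field_simp
          rw [h]
  -- rewriting the reward sums by context
  have hswap : ∀ (ω : Ω) (π : Fin C → Fin K),
      ∑ t ∈ Finset.range T, rr (π (ctx ω t)) t (ctx ω t)
        = ∑ c : Fin C, ∑ t ∈ Finset.range T, (if ctx ω t = c then rr (π c) t c else 0) := by
    intro ω π
    rw [Finset.sum_comm]
    refine Finset.sum_congr rfl fun t _ => ?_
    rw [Finset.sum_ite_eq (Finset.univ : Finset (Fin C)) (ctx ω t)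
      (fun c => rr (π c) t c)]
    simp
  -- pointwise domination
  have hpoint : ∀ ω,
      (∑ t ∈ Finset.range T, rr (πP ω (ctx ω t)) t (ctx ω t))
        - (∑ t ∈ Finset.range T, rr (πA (ctx ω t)) t (ctx ω t)) ≤ G ω := by
    intro ω
    rw [hswap ω (πP ω), hswap ω πA, ← Finset.sum_sub_distrib]
    refine Finset.sum_le_sum fun c _ => ?_
    have hRHS_nonneg : (0:ℝ) ≤ ∑ i ∈ Finset.univ \ {πA c},
        (if S c i ω ≤ 0 then (T:ℝ) else 0) := by
      refine Finset.sum_nonneg fun i _ => ?_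
      split <;> simp [le_of_lt hT0]
    by_cases h : πP ω c = πA c
    · rw [h, sub_self]; exact hRHS_nonneg
    · have hi₀ : πP ω c ∈ Finset.univ \ {πA c} := by simp [h]
      have hS0 : S c (πP ω c) ω ≤ 0 := by
        have h1 := hP ω c (πA c)
        have h2 : S c (πP ω c) ω
            = (∑ t ∈ Finset.range T, (if ctx ω t = c then rr (πA c) t c else 0))
              - (∑ t ∈ Finset.range T, (if ctx ω t = c then rr (πP ω c) t c else 0)) := by
          rw [hS_def, ← Finset.sum_sub_distrib]
          refine Finset.sum_congr rfl fun t _ => ?_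
          split <;> simp
        linarith
      have hsingle : (T:ℝ) ≤ ∑ i ∈ Finset.univ \ {πA c},
          (if S c i ω ≤ 0 then (T:ℝ) else 0) := by
        have := Finset.single_le_sum (f := fun i => if S c i ω ≤ 0 then (T:ℝ) else 0)
          (fun i _ => by split <;> simp [le_of_lt hT0]) hi₀
        simpa [hS0] using this
      have hub : (∑ t ∈ Finset.range T, (if ctx ω t = c then rr (πP ω c) t c else 0))
          ≤ (T:ℝ) := by
        calc ∑ t ∈ Finset.range T, (if ctx ω t = c then rr (πP ω c) t c else 0)
            ≤ ∑ _t ∈ Finset.range T, (1:ℝ) := by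
              refine Finset.sum_le_sum fun t _ => ?_
              have := (hrr (πP ω c) t c)
              rw [Set.mem_Icc] at this
              split <;> linarith
          _ = T := by simp
      have hlb : (0:ℝ) ≤ ∑ t ∈ Finset.range T, (if ctx ω t = c then rr (πA c) t c else 0) := by
        refine Finset.sum_nonneg fun t _ => ?_
        have := (hrr (πA c) t c)
        rw [Set.mem_Icc] at this
        split <;> linarith
      linarith
  -- integrability of the ex-ante benchmark
  have hAint : Integrable (fun ω => ∑ t ∈ Finset.range T,
      rr (πA (ctx ω t)) t (ctx ω t)) μ := by
    apply integrable_finset_sum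
    intro t _
    refine Integrable.mono' (integrable_const (1:ℝ))
      (((measurable_of_countable (fun x => rr (πA x) t x)).comp (hmeas t)).aestronglyMeasurable)
      (ae_of_all _ fun ω => ?_)
    have := hrr (πA (ctx ω t)) t (ctx ω t)
    rw [Set.mem_Icc] at this
    rw [Real.norm_eq_abs, abs_le]
    constructor <;> linarith
  have hAnonneg : 0 ≤ ∫ ω, (∑ t ∈ Finset.range T, rr (πA (ctx ω t)) t (ctx ω t)) ∂μ := by
    refine integral_nonneg fun ω => ?_
    refine Finset.sum_nonneg fun t _ => ?_
    exact (hrr (πA (ctx ω t)) t (ctx ω t)).1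
  by_cases hF : Integrable (fun ω => ∑ t ∈ Finset.range T,
      rr (πP ω (ctx ω t)) t (ctx ω t)) μ
  · rw [← integral_sub hF hAint]
    calc ∫ ω, ((∑ t ∈ Finset.range T, rr (πP ω (ctx ω t)) t (ctx ω t))
          - (∑ t ∈ Finset.range T, rr (πA (ctx ω t)) t (ctx ω t))) ∂μ
        ≤ ∫ ω, G ω ∂μ := integral_mono (hF.sub hAint) hGint hpoint
      _ ≤ 1 := hGbound
  · rw [integral_undef hF]
    linarith
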